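/- arXiv:1208.5298 — 2 statements merged into one kernel-verified Lean document; each statement's English description precedes it below -/
import Mathlib

section
/- Let R be a commutative ring of characteristic zero with J(R) ≠ 0 which is not submaximal. Then for every x ∈ J(R) and every polynomial f ∈ ℤ[t] with f(x) = 0 we have f(0) = 0. In particular every element of J(R) is a zero divisor. -/
/-- A ring is submaximal if it has a maximal subring. -/
def Submaximal (R : Type*) [CommRing R] : Prop :=
  ∃ S : Subring R, S ≠ ⊤ ∧ ∀ T : Subring R, S < T → T = ⊤

namespace Stmt11

open Polynomial

section Kernel

variable {K : Type*} [Field K]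

/-- `u` is a unit belonging to the subring `V`. -/
def UnitIn (V : Subring K) (u : K) : Prop := u ∈ V ∧ ∃ v ∈ V, u * v = 1

/-- every nonzero element of `V` is `π ^ k` times a unit of `V`. -/
def NF (π : K) (V : Subring K) : Prop :=
  ∀ a ∈ V, a ≠ 0 → ∃ (k : ℕ) (u : K), UnitIn V u ∧ a = π ^ k * u

/-- `π` is not invertible in `V`. -/
def NoInv (π : K) (V : Subring K) : Prop := ∀ u ∈ V, π * u ≠ 1

def Good (π : K) (V : Subring K) : Prop := π ∈ V ∧ NF π V ∧ NoInv π V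

/-- all coefficients of `P` lie in `V`. -/
def Coeffs (V : Subring K) (P : Polynomial K) : Prop := ∀ i, P.coeff i ∈ V

/-- all coefficients in `V` and some coefficient a unit of `V`. -/
def ContUnit (π : K) (V : Subring K) (P : Polynomial K) : Prop :=
  Coeffs V P ∧ ∃ i, UnitIn V (P.coeff i)

variable {π : K} {V : Subring K}

theorem UnitIn.ne_zero (h : UnitIn V u) : u ≠ 0 := by
  rintro rfl
  obtain ⟨-, v, -, hv⟩ := h
  simp at hv

theorem UnitIn.mul (h1 : UnitIn V u1) (h2 : UnitIn V u2) : UnitIn V (u1 * u2) := by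
  obtain ⟨m1, v1, hv1, e1⟩ := h1
  obtain ⟨m2, v2, hv2, e2⟩ := h2
  exact ⟨V.mul_mem m1 m2, v1 * v2, V.mul_mem hv1 hv2, by
    rw [mul_mul_mul_comm, e1, e2, one_mul]⟩

theorem not_unitIn (hG : Good π V) (ha : a ∈ V) (hu : ¬ UnitIn V a) :
    ∃ w ∈ V, a = π * w := by
  rcases eq_or_ne a 0 with rfl | h0
  · exact ⟨0, V.zero_mem, by ring⟩
  obtain ⟨k, u, hu', he⟩ := hG.2.1 a ha h0
  cases k with
  | zero => exact absurd (by rw [he, pow_zero, one_mul]; exact hu') hu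
  | succ k =>
    exact ⟨π ^ k * u, V.mul_mem (V.pow_mem hG.1 k) hu'.1, by rw [he]; ring⟩

theorem unitIn_add_pi_mul (hG : Good π V) (hu : UnitIn V u) (hw : w ∈ V) :
    UnitIn V (u + π * w) := by
  obtain ⟨hum, v, hv, huv⟩ := hu
  have hmem : u + π * w ∈ V := V.add_mem hum (V.mul_mem hG.1 hw)
  have hne : u + π * w ≠ 0 := by
    intro h
    have hu_eq : u = π * -w := by
      rw [eq_neg_of_add_eq_zero_left h]; ring
    exact hG.2.2 (-w * v) (V.mul_mem (V.neg_mem hw) hv)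
      (by rw [← mul_assoc, ← hu_eq, huv])
  obtain ⟨k, u', hu', he⟩ := hG.2.1 _ hmem hne
  cases k with
  | zero => rw [he, pow_zero, one_mul]; exact hu'
  | succ k =>
    exfalso
    have hu_eq : u = π * (π ^ k * u' - w) := by
      have h1 : u = π ^ (k + 1) * u' - π * w := by rw [← he]; ring
      rw [h1, pow_succ]; ring
    exact hG.2.2 _ (V.mul_mem (V.sub_mem (V.mul_mem (V.pow_mem hG.1 k) hu'.1) hw) hv)
      (by rw [← mul_assoc, ← hu_eq, huv])

theorem Coeffs.mul (hP : Coeffs V P) (hQ : Coeffs V Q) : Coeffs V (P * Q) := by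
  intro k
  rw [coeff_mul]
  exact V.sum_mem (fun c _ => V.mul_mem (hP _) (hQ _))

theorem Coeffs.add (hP : Coeffs V P) (hQ : Coeffs V Q) : Coeffs V (P + Q) := by
  intro i; rw [coeff_add]; exact V.add_mem (hP i) (hQ i)

theorem Coeffs.one : Coeffs V (1 : Polynomial K) := by
  intro i
  rcases eq_or_ne i 0 with rfl | hi
  · simpa using V.one_mem
  · simpa [coeff_one, hi] using V.zero_mem

theorem Coeffs.zero : Coeffs V (0 : Polynomial K) := by
  intro i; simpa using V.zero_mem

theorem Coeffs.neg (hP : Coeffs V P) : Coeffs V (-P) := by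
  intro i; rw [coeff_neg]; exact V.neg_mem (hP i)

theorem Coeffs.sub (hP : Coeffs V P) (hQ : Coeffs V Q) : Coeffs V (P - Q) := by
  rw [sub_eq_add_neg]; exact hP.add hQ.neg

theorem Coeffs.C_mem (ha : a ∈ V) : Coeffs V (Polynomial.C a) := by
  intro i
  rcases eq_or_ne i 0 with rfl | hi
  · simpa using ha
  · simpa [Polynomial.coeff_C, hi] using V.zero_mem

theorem Coeffs.X_mem : Coeffs V (Polynomial.X : Polynomial K) := by
  intro i
  rcases eq_or_ne i 1 with rfl | hi
  · simpa using V.one_mem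
  · simpa [Polynomial.coeff_X, Ne.symm hi] using V.zero_mem

theorem unitIn_one : UnitIn V (1 : K) := ⟨V.one_mem, 1, V.one_mem, by ring⟩

theorem contUnit_one : ContUnit π V (1 : Polynomial K) :=
  ⟨Coeffs.one, 0, by simpa using unitIn_one⟩

theorem ContUnit.ne_zero (hP : ContUnit π V P) : P ≠ 0 := by
  obtain ⟨-, i, hi⟩ := hP
  intro h
  exact hi.ne_zero (by simp [h])

theorem gauss (hG : Good π V) (hP : ContUnit π V P) (hQ : ContUnit π V Q) :
    ContUnit π V (P * Q) := by
  classical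
  obtain ⟨hPc, hPu⟩ := hP
  obtain ⟨hQc, hQu⟩ := hQ
  set i₀ := Nat.find hPu with hi₀def
  set j₀ := Nat.find hQu with hj₀def
  have hi₀ : UnitIn V (P.coeff i₀) := Nat.find_spec hPu
  have hj₀ : UnitIn V (Q.coeff j₀) := Nat.find_spec hQu
  have hsum : ∃ w ∈ V,
      (((Finset.HasAntidiagonal.antidiagonal (i₀ + j₀)).erase (i₀, j₀)).sum
        (fun x => P.coeff x.1 * Q.coeff x.2)) = π * w := by
    set M : AddSubmonoid K :=
      { carrier := {z | ∃ w ∈ V, z = π * w}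
        zero_mem' := ⟨0, V.zero_mem, by ring⟩
        add_mem' := by
          rintro a b ⟨wa, hwa, rfl⟩ ⟨wb, hwb, rfl⟩
          exact ⟨wa + wb, V.add_mem hwa hwb, by ring⟩ } with hM
    have : (((Finset.HasAntidiagonal.antidiagonal (i₀ + j₀)).erase (i₀, j₀)).sum
        (fun x => P.coeff x.1 * Q.coeff x.2)) ∈ M := by
      apply AddSubmonoid.sum_mem
      rintro ⟨i, j⟩ hx
      obtain ⟨hne, hmem⟩ := Finset.mem_erase.mp hx
      have hij : i + j = i₀ + j₀ := Finset.HasAntidiagonal.mem_antidiagonal.mp hmem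
      have hne' : ¬(i = i₀ ∧ j = j₀) := by
        intro hh; exact hne (by rw [hh.1, hh.2])
      rcases lt_or_ge i i₀ with hlt | hge
      · obtain ⟨w', hw', he⟩ := not_unitIn hG (hPc i) (Nat.find_min hPu hlt)
        exact ⟨w' * Q.coeff j, V.mul_mem hw' (hQc j), by rw [he]; ring⟩
      · have hjlt : j < j₀ := by omega
        obtain ⟨w', hw', he⟩ := not_unitIn hG (hQc j) (Nat.find_min hQu hjlt)
        exact ⟨P.coeff i * w', V.mul_mem (hPc i) hw', by rw [he]; ring⟩
    obtain ⟨w, hw, hwe⟩ := this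
    exact ⟨w, hw, hwe⟩
  obtain ⟨w, hw, hwe⟩ := hsum
  refine ⟨hPc.mul hQc, i₀ + j₀, ?_⟩
  have hco : (P * Q).coeff (i₀ + j₀) = P.coeff i₀ * Q.coeff j₀ + π * w := by
    rw [coeff_mul, ← hwe]
    exact (Finset.add_sum_erase _ (fun x : ℕ × ℕ => P.coeff x.1 * Q.coeff x.2)
      (a := ((i₀, j₀) : ℕ × ℕ)) (Finset.HasAntidiagonal.mem_antidiagonal.mpr rfl)).symm
  rw [hco]
  exact unitIn_add_pi_mul hG (hi₀.mul hj₀) hw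

theorem content (hπ0 : π ≠ 0) (hG : Good π V) (hP : Coeffs V P) (h0 : P ≠ 0) :
    ∃ (k : ℕ) (P₀ : Polynomial K), ContUnit π V P₀ ∧ P = Polynomial.C (π ^ k) * P₀ := by
  classical
  have hv : ∀ i ∈ P.support, ∃ kk, ∃ u, UnitIn V u ∧ P.coeff i = π ^ kk * u := by
    intro i hi
    exact hG.2.1 _ (hP i) (mem_support_iff.mp hi)
  choose! v u hu hval using hv
  have hsupp : P.support.Nonempty := nonempty_support_iff.mpr h0
  obtain ⟨i₀, hi₀s, hmin⟩ := P.support.exists_min_image v hsupp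
  set k := v i₀ with hk
  have hgen : ∀ i ∈ P.support, (π ^ k)⁻¹ * P.coeff i = π ^ (v i - k) * u i := by
    intro i hi
    have hle : k ≤ v i := hmin i hi
    rw [hval i hi, show v i = k + (v i - k) by omega, pow_add]
    rw [Nat.add_sub_cancel_left, ← mul_assoc, ← mul_assoc, inv_mul_cancel₀ (pow_ne_zero _ hπ0), one_mul]
  refine ⟨k, Polynomial.C ((π ^ k)⁻¹) * P, ⟨?_, ⟨i₀, ?_⟩⟩, ?_⟩
  · intro i
    rw [coeff_C_mul]
    rcases em (i ∈ P.support) with hi | hi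
    · rw [hgen i hi]
      exact V.mul_mem (V.pow_mem hG.1 _) (hu i hi).1
    · rw [notMem_support_iff.mp hi, mul_zero]; exact V.zero_mem
  · rw [coeff_C_mul, hgen i₀ hi₀s, ← hk, Nat.sub_self, pow_zero, one_mul]
    exact hu i₀ hi₀s
  · rw [← mul_assoc, ← Polynomial.C_mul,
      mul_inv_cancel₀ (pow_ne_zero _ hπ0), Polynomial.C_1, one_mul]

/-- the step extension: if `x` is transcendental over `V`, a strictly
bigger good subring exists. -/
theorem step (hπ0 : π ≠ 0) (hG : Good π V) (x : K)
    (hx : ∀ P, Coeffs V P → P ≠ 0 → P.eval x ≠ 0) :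
    ∃ V' : Subring K, V ≤ V' ∧ Good π V' ∧ x ∈ V' := by
  classical
  set V' : Subring K :=
    { carrier := {y | ∃ P Q : Polynomial K, Coeffs V P ∧ ContUnit π V Q ∧
        y * Q.eval x = P.eval x}
      one_mem' := ⟨1, 1, Coeffs.one, contUnit_one, by simp⟩
      zero_mem' := ⟨0, 1, Coeffs.zero, contUnit_one, by simp⟩
      mul_mem' := by
        rintro y z ⟨P1, Q1, hP1, hQ1, he1⟩ ⟨P2, Q2, hP2, hQ2, he2⟩
        refine ⟨P1 * P2, Q1 * Q2, hP1.mul hP2, gauss hG hQ1 hQ2, ?_⟩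
        rw [eval_mul, eval_mul, ← he1, ← he2]; ring
      add_mem' := by
        rintro y z ⟨P1, Q1, hP1, hQ1, he1⟩ ⟨P2, Q2, hP2, hQ2, he2⟩
        refine ⟨P1 * Q2 + P2 * Q1, Q1 * Q2, (hP1.mul hQ2.1).add (hP2.mul hQ1.1),
          gauss hG hQ1 hQ2, ?_⟩
        rw [eval_add, eval_mul, eval_mul, eval_mul, ← he1, ← he2]; ring
      neg_mem' := by
        rintro y ⟨P1, Q1, hP1, hQ1, he1⟩
        refine ⟨-P1, Q1, hP1.neg, hQ1, ?_⟩
        rw [eval_neg, ← he1]; ring } with hV'def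
  have hVle : V ≤ V' := by
    intro a ha
    exact ⟨Polynomial.C a, 1, Coeffs.C_mem ha, contUnit_one, by simp⟩
  have hxV' : x ∈ V' := ⟨Polynomial.X, 1, Coeffs.X_mem, contUnit_one, by simp⟩
  have hQne : ∀ Q : Polynomial K, ContUnit π V Q → Q.eval x ≠ 0 :=
    fun Q hQ => hx Q hQ.1 hQ.ne_zero
  refine ⟨V', hVle, ⟨hVle hG.1, ?_, ?_⟩, hxV'⟩
  · -- NF
    rintro y ⟨P, Q, hP, hQ, he⟩ hy0
    have hP0 : P ≠ 0 := by
      rintro rfl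
      rw [eval_zero] at he
      exact hy0 ((mul_eq_zero.mp he).resolve_right (hQne Q hQ))
    obtain ⟨k, P₀, hP₀, hPe⟩ := content hπ0 hG hP hP0
    have hP₀ne : P₀.eval x ≠ 0 := hQne P₀ hP₀
    refine ⟨k, P₀.eval x * (Q.eval x)⁻¹, ⟨⟨P₀, Q, hP₀.1, hQ, ?_⟩, Q.eval x * (P₀.eval x)⁻¹,
      ⟨Q, P₀, hQ.1, hP₀, ?_⟩, ?_⟩, ?_⟩
    · rw [mul_assoc, inv_mul_cancel₀ (hQne Q hQ), mul_one]
    · rw [mul_assoc, inv_mul_cancel₀ hP₀ne, mul_one]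
    · field_simp
      exact div_self (hQne Q hQ)
    · have h1 : y * Q.eval x = π ^ k * (P₀.eval x) := by
        rw [he, hPe, eval_mul, eval_C]
      have h2 : y = π ^ k * P₀.eval x / Q.eval x :=
        (eq_div_iff (hQne Q hQ)).mpr h1
      rw [h2, div_eq_mul_inv, mul_assoc]
  · -- NoInv
    rintro y ⟨P, Q, hP, hQ, he⟩ hinv
    have hZ : (Polynomial.C π * P - Q).eval x = 0 := by
      rw [eval_sub, eval_mul, eval_C]
      have : π * (y * Q.eval x) = π * P.eval x := by rw [he]
      rw [← mul_assoc, hinv, one_mul] at this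
      rw [← this]; ring
    have hZ0 : Polynomial.C π * P - Q = 0 := by
      by_contra hne
      exact hx _ (((Coeffs.C_mem hG.1).mul hP).sub hQ.1) hne hZ
    have hQeq : Q = Polynomial.C π * P := by
      rw [sub_eq_zero] at hZ0; exact hZ0.symm
    obtain ⟨-, i, hui⟩ := hQ
    rw [hQeq, coeff_C_mul] at hui
    obtain ⟨hm, v, hv, huv⟩ := hui
    exact hG.2.2 (P.coeff i * v) (V.mul_mem (hP i) hv) (by rw [← huv]; ring)

/-- Zorn: a maximal good subring over which everything is algebraic. -/
theorem exists_max_good (hπ0 : π ≠ 0) (Vi : Subring K) (hGi : Good π Vi) :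
    ∃ W : Subring K, Good π W ∧
      ∀ x : K, ∃ P : Polynomial K, Coeffs W P ∧ P ≠ 0 ∧ P.eval x = 0 := by
  obtain ⟨W, -, hWmax⟩ := zorn_le_nonempty₀ {V : Subring K | Good π V}
    (fun c hcs hchain y hy => by
      have hne : c.Nonempty := ⟨y, hy⟩
      have hdir : DirectedOn (· ≤ ·) c := hchain.directedOn
      refine ⟨sSup c, ⟨?_, ?_, ?_⟩, fun z hz => le_sSup hz⟩
      · exact (Subring.mem_sSup_of_directedOn hne hdir).mpr ⟨y, hy, (hcs hy).1⟩
      · intro a ha h0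
        obtain ⟨V₁, hV₁, haV₁⟩ := (Subring.mem_sSup_of_directedOn hne hdir).mp ha
        obtain ⟨k, u, ⟨hum, v, hv, huv⟩, he⟩ := (hcs hV₁).2.1 a haV₁ h0
        exact ⟨k, u, ⟨(le_sSup hV₁) hum, v, (le_sSup hV₁) hv, huv⟩, he⟩
      · intro u hu heq
        obtain ⟨V₁, hV₁, huV₁⟩ := (Subring.mem_sSup_of_directedOn hne hdir).mp hu
        exact (hcs hV₁).2.2 u huV₁ heq)
    Vi hGi
  refine ⟨W, hWmax.1, ?_⟩
  intro x
  by_contra hcon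
  push_neg at hcon
  obtain ⟨V', hle, hG', hxV'⟩ := step hπ0 hWmax.1 x
    (fun P hP h0 => hcon P hP h0)
  have hVW : V' = W := le_antisymm (hWmax.2 hG' hle) hle
  rw [hVW] at hxV'
  refine hcon (Polynomial.X - Polynomial.C x) ?_ (Polynomial.X_sub_C_ne_zero x) (by simp)
  intro i
  rw [coeff_sub]
  match i with
  | 0 => simpa using W.neg_mem hxV'
  | 1 => simpa [Polynomial.coeff_C] using W.one_mem
  | (n+2) => simpa [Polynomial.coeff_C, Polynomial.coeff_X] using W.zero_mem

/-- Main kernel theorem. -/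
theorem kernel (hπ0 : π ≠ 0) (Vi : Subring K) (hGi : Good π Vi) :
    ∃ T : Subring K, π ∈ T ∧ NoInv π T ∧ ∀ x : K, ∃ k : ℕ, π ^ k * x ∈ T := by
  classical
  obtain ⟨W, hGW, halg⟩ := exists_max_good hπ0 Vi hGi
  letI : Algebra ↥W K := (Subring.subtype W).toAlgebra
  have halgmap : ∀ c : ↥W, (algebraMap ↥W K) c = (c : K) := fun c => rfl
  -- the q-trick : an integral inverse of π lies in W
  have qtrick : ∀ u : K, IsIntegral ↥W u → π * u = 1 → u ∈ W := by
    intro u hint hπu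
    obtain ⟨p, pmonic, hp⟩ := hint
    set m := p.natDegree with hm
    have hm1 : 1 ≤ m := by
      by_contra hc
      have h0 : m = 0 := by omega
      have : p = 1 := (Polynomial.Monic.natDegree_eq_zero pmonic).mp h0
      rw [this] at hp
      simp at hp
    have hexp : ∀ i, i ≤ m - 1 → u ^ i * π ^ (m - 1) = π ^ (m - 1 - i) := by
      intro i hi
      have hsplit : π ^ (m - 1) = π ^ i * π ^ (m - 1 - i) := by
        rw [← pow_add]; congr 1; omega
      rw [hsplit, ← mul_assoc, ← mul_pow, mul_comm u π, hπu, one_pow, one_mul]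
    have hexpm : u ^ m * π ^ (m - 1) = u := by
      have h1 : u ^ m = u * u ^ (m - 1) := by
        conv_lhs => rw [show m = 1 + (m - 1) by omega]
        rw [pow_add, pow_one]
      rw [h1, mul_assoc, ← mul_pow, mul_comm u π, hπu, one_pow, mul_one]
    have h2 : (∑ i ∈ Finset.range (m + 1), (p.coeff i : K) * u ^ i) * π ^ (m - 1) = 0 := by
      rw [Polynomial.eval₂_eq_sum_range] at hp
      have h3 : (∑ i ∈ Finset.range (m + 1), (p.coeff i : K) * u ^ i) = 0 := hp
      rw [h3, zero_mul]
    rw [Finset.sum_mul, Finset.sum_range_succ] at h2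
    have htop : (p.coeff m : K) * u ^ m * π ^ (m - 1) = u := by
      have : p.coeff m = 1 := pmonic.coeff_natDegree
      rw [this, OneMemClass.coe_one, one_mul, hexpm]
    rw [htop] at h2
    have hsum : ∑ i ∈ Finset.range m, (p.coeff i : K) * u ^ i * π ^ (m - 1) ∈ W := by
      apply W.sum_mem
      intro i hi
      have hi' : i ≤ m - 1 := by
        have := Finset.mem_range.mp hi; omega
      rw [mul_assoc, hexp i hi']
      exact W.mul_mem (p.coeff i).2 (W.pow_mem hGW.1 _)
    rw [eq_neg_of_add_eq_zero_right h2]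
    exact W.neg_mem hsum
  refine ⟨(integralClosure ↥W K).toSubring, ?_, ?_, ?_⟩
  · show π ∈ integralClosure ↥W K
    exact isIntegral_algebraMap (x := (⟨π, hGW.1⟩ : ↥W))
  · intro u hu heq
    have : u ∈ W := qtrick u hu heq
    exact hGW.2.2 u this heq
  · intro x
    rcases eq_or_ne x 0 with rfl | hx0
    · exact ⟨0, by simpa using (integralClosure ↥W K).toSubring.zero_mem⟩
    obtain ⟨P, hPc, hP0, hPe⟩ := halg x
    set n := P.natDegree with hn
    have hn1 : 1 ≤ n := by
      by_contra hc
      have h0 : n = 0 := by omega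
      obtain ⟨a, rfl⟩ := Polynomial.natDegree_eq_zero.mp h0
      rw [Polynomial.eval_C] at hPe
      rw [hPe] at hP0
      simp at hP0
    have hlc : P.coeff n ≠ 0 := by
      rw [hn]
      exact Polynomial.leadingCoeff_ne_zero.mpr hP0
    obtain ⟨N, un, ⟨hunm, un', hun', huu⟩, hen⟩ := hGW.2.1 _ (hPc n) hlc
    set cn := P.coeff n with hcn
    have hcn0 : cn ≠ 0 := hlc
    -- the coefficients of the monic polynomial
    set e : ℕ → K := fun i => P.coeff i * π ^ (N * (n - i)) * cn⁻¹ with he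
    have hemem : ∀ i, i < n → e i ∈ W := by
      intro i hi
      rcases eq_or_ne (P.coeff i) 0 with h0 | h0
      · rw [he]; simp only [h0, zero_mul]; exact W.zero_mem
      obtain ⟨v, u, ⟨hum2, v2, hv2, huv2⟩, hev⟩ := hGW.2.1 _ (hPc i) h0
      have hNle : N ≤ v + N * (n - i) := by
        have h1 : 1 ≤ n - i := by omega
        have h2 : N * 1 ≤ N * (n - i) := Nat.mul_le_mul_left N h1
        omega
      have hpows : π ^ v * π ^ (N * (n - i)) = π ^ (v + N * (n - i) - N) * π ^ N := by
        rw [← pow_add, ← pow_add]; congr 1; omega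
      have hcnne : (π ^ N * un) ≠ 0 := by
        apply mul_ne_zero (pow_ne_zero _ hπ0)
        intro hz; rw [hz, zero_mul] at huu; exact zero_ne_one huu
      have hun2 : un' * un = 1 := by rw [mul_comm]; exact huu
      have key : π ^ v * u * π ^ (N * (n - i))
          = (π ^ (v + N * (n - i) - N) * (u * un')) * (π ^ N * un) := by
        rw [show (π ^ (v + N * (n - i) - N) * (u * un')) * (π ^ N * un)
            = (π ^ (v + N * (n - i) - N) * π ^ N) * u * (un' * un) by ring, hun2, mul_one,
          ← hpows]
        ring
      have hrw : e i = π ^ (v + N * (n - i) - N) * (u * un') := by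
        have h5 : e i = π ^ v * u * π ^ (N * (n - i)) * (π ^ N * un)⁻¹ := by
          simp only [he]
          rw [hev, hen]
        rw [h5, key, mul_inv_cancel_right₀ hcnne]
      rw [hrw]
      exact W.mul_mem (W.pow_mem hGW.1 _) (W.mul_mem hum2 hun')
    refine ⟨N, ?_⟩
    show π ^ N * x ∈ integralClosure ↥W K
    set y := π ^ N * x with hy
    set ew : ℕ → ↥W := fun i => if h : i < n then ⟨e i, hemem i h⟩ else 0 with hew
    refine ⟨Polynomial.X ^ n + ∑ i ∈ Finset.range n, Polynomial.C (ew i) * Polynomial.X ^ i,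
      ?_, ?_⟩
    · apply Polynomial.monic_X_pow_add
      apply lt_of_le_of_lt (Polynomial.degree_sum_le _ _)
      rw [Finset.sup_lt_iff (show (⊥ : WithBot ℕ) < (n : WithBot ℕ) from WithBot.bot_lt_coe n)]
      intro i hi
      apply lt_of_le_of_lt (Polynomial.degree_C_mul_X_pow_le _ _)
      exact_mod_cast Finset.mem_range.mp hi
    · rw [Polynomial.eval₂_add, Polynomial.eval₂_X_pow, Polynomial.eval₂_finset_sum]
      simp only [Polynomial.eval₂_mul, Polynomial.eval₂_C, Polynomial.eval₂_X_pow]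
      have hewc : ∀ i ∈ Finset.range n,
          (algebraMap ↥W K) (ew i) * y ^ i = (π ^ (N * n) * cn⁻¹) * (P.coeff i * x ^ i) := by
        intro i hi
        have hi' := Finset.mem_range.mp hi
        have hpp : π ^ (N * (n - i)) * π ^ (N * i) = π ^ (N * n) := by
          rw [← pow_add, ← Nat.mul_add, Nat.sub_add_cancel (le_of_lt hi')]
        have hewe : (algebraMap ↥W K) (ew i) = e i := by
          rw [halgmap, hew]
          simp only [dif_pos hi']
        rw [hewe]
        calc e i * y ^ i
            = (π ^ (N * (n - i)) * π ^ (N * i)) * cn⁻¹ * (P.coeff i * x ^ i) := by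
              simp only [he, hy]
              rw [mul_pow, ← pow_mul]
              ring
          _ = (π ^ (N * n) * cn⁻¹) * (P.coeff i * x ^ i) := by rw [hpp]
      rw [Finset.sum_congr rfl hewc, ← Finset.mul_sum]
      have hyn : y ^ n = (π ^ (N * n) * cn⁻¹) * (P.coeff n * x ^ n) := by
        simp only [hy]
        rw [mul_pow, ← pow_mul]
        rw [show (π ^ (N * n) * cn⁻¹) * (P.coeff n * x ^ n)
            = (cn⁻¹ * cn) * (π ^ (N * n) * x ^ n) by ring, inv_mul_cancel₀ hcn0, one_mul]
      rw [hyn, ← mul_add]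
      have hPev : P.coeff n * x ^ n + (∑ i ∈ Finset.range n, P.coeff i * x ^ i) = 0 := by
        have h6 : P.eval x = ∑ i ∈ Finset.range (n + 1), P.coeff i * x ^ i :=
          Polynomial.eval_eq_sum_range' (by omega) x
        rw [Finset.sum_range_succ] at h6
        rw [← hPe, h6]
        ring
      rw [hPev, mul_zero]

/-- From the kernel data one gets a maximal subring of any ring mapping to `K`
in which `π` comes from a unit. -/
theorem submax_pull {R : Type*} [CommRing R] (ρ : R →+* K) (πR w : R)
    (hπw : πR * w = 1) (T : Subring K) (hπT : ρ πR ∈ T) (hNoInv : NoInv (ρ πR) T)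
    (hsat : ∀ x : K, ∃ k : ℕ, (ρ πR) ^ k * x ∈ T) : Submaximal R := by
  set π := ρ πR with hπ
  set wK := ρ w with hwK
  have hπwK : π * wK = 1 := by rw [hπ, hwK, ← map_mul, hπw, map_one]
  set D' := ρ.range with hD'
  set s : Set (Subring K) :=
    {S | S ≤ D' ∧ π ∈ S ∧ wK ∉ S ∧ ∀ x ∈ D', ∃ k : ℕ, π ^ k * x ∈ S} with hs
  have hwT : wK ∉ T := fun hw => hNoInv wK hw hπwK
  have hTD : T ⊓ D' ∈ s := by
    refine ⟨inf_le_right, ⟨hπT, ⟨πR, rfl⟩⟩, fun hw => hwT hw.1, ?_⟩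
    intro x hx
    obtain ⟨k, hk⟩ := hsat x
    exact ⟨k, hk, D'.mul_mem (D'.pow_mem ⟨πR, rfl⟩ k) hx⟩
  obtain ⟨M, -, hMmax⟩ := zorn_le_nonempty₀ s
    (fun c hcs hchain y hy => by
      have hne : c.Nonempty := ⟨y, hy⟩
      have hdir : DirectedOn (· ≤ ·) c := hchain.directedOn
      refine ⟨sSup c, ⟨?_, ?_, ?_, ?_⟩, fun z hz => le_sSup hz⟩
      · exact sSup_le (fun z hz => (hcs hz).1)
      · exact (Subring.mem_sSup_of_directedOn hne hdir).mpr ⟨y, hy, (hcs hy).2.1⟩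
      · intro hw
        obtain ⟨V₁, hV₁, hwV₁⟩ := (Subring.mem_sSup_of_directedOn hne hdir).mp hw
        exact (hcs hV₁).2.2.1 hwV₁
      · intro x hx
        obtain ⟨k, hk⟩ := (hcs hy).2.2.2 x hx
        exact ⟨k, (le_sSup hy) hk⟩)
    _ hTD
  have hMs := hMmax.1
  -- M is a maximal subring of D'
  have hmaxsub : ∀ S : Subring K, M < S → S ≤ D' → S = D' := by
    intro S hlt hSD
    by_cases hw : wK ∈ S
    · refine le_antisymm hSD ?_
      intro x hx
      obtain ⟨k, hk⟩ := hMs.2.2.2 x hx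
      have hxe : x = wK ^ k * (π ^ k * x) := by
        rw [← mul_assoc, ← mul_pow, mul_comm wK π, hπwK, one_pow, one_mul]
      rw [hxe]
      exact S.mul_mem (S.pow_mem hw k) (hlt.le hk)
    · have hS : S ∈ s := ⟨hSD, hlt.le hMs.2.1, hw,
        fun x hx => (hMs.2.2.2 x hx).imp (fun k hk => hlt.le hk)⟩
      exact absurd (hMmax.2 hS hlt.le) (not_le_of_gt hlt)
  refine ⟨M.comap ρ, ?_, ?_⟩
  · intro hT
    have hwmem : w ∈ M.comap ρ := by rw [hT]; trivial
    exact hMs.2.2.1 (Subring.mem_comap.mp hwmem)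
  · intro T' hT'
    have heq : T' = (T'.map ρ).comap ρ := by
      apply le_antisymm
      · intro t ht
        exact Subring.mem_comap.mpr (Subring.mem_map.mpr ⟨t, ht, rfl⟩)
      · intro a ha
        obtain ⟨t, ht, hta⟩ := Subring.mem_map.mp (Subring.mem_comap.mp ha)
        have h1 : a - t ∈ M.comap ρ := Subring.mem_comap.mpr (by
          rw [map_sub, hta, sub_self]
          exact M.zero_mem)
        have h2 : a - t ∈ T' := hT'.le h1
        have := T'.add_mem h2 ht
        rwa [sub_add_cancel] at this
    have hMle : M ≤ T'.map ρ := by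
      intro m hm
      obtain ⟨r, hr⟩ := hMs.1 hm
      exact ⟨r, hT'.le (Subring.mem_comap.mpr (by rw [hr]; exact hm)), hr⟩
    have hmap_le : T'.map ρ ≤ D' := by
      rintro _ ⟨t, -, rfl⟩
      exact ⟨t, rfl⟩
    rcases eq_or_lt_of_le hMle with heq2 | hlt2
    · exfalso
      rw [heq, ← heq2] at hT'
      exact lt_irrefl _ hT'
    · have hDeq : T'.map ρ = D' := hmaxsub _ hlt2 hmap_le
      rw [heq, hDeq]
      ext a
      simp only [Subring.mem_comap, Subring.mem_top, iff_true]
      exact ⟨a, rfl⟩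

end Kernel

section Reductions

universe u

variable {R : Type*} [CommRing R]

/-- fraction field of a quotient by a prime avoiding a submonoid. -/
theorem exists_quot {R : Type u} [CommRing R] (S : Submonoid R) (h0 : (0 : R) ∉ S) :
    ∃ (K : Type u) (_ : Field K) (ρ : R →+* K), ∀ r ∈ S, ρ r ≠ 0 := by
  obtain ⟨p, hp, -, hdisj⟩ := Ideal.exists_le_prime_disjoint (⊥ : Ideal R) S
    (by
      rw [Set.disjoint_left]
      intro a ha
      have : a = 0 := by simpa using ha
      rw [this]; exact h0)
  haveI : p.IsPrime := hp
  letI D := R ⧸ p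
  letI K := FractionRing D
  refine ⟨K, inferInstance, (algebraMap D K).comp (Ideal.Quotient.mk p), ?_⟩
  intro r hr hzero
  have h1 : Ideal.Quotient.mk p r = 0 := by
    apply IsFractionRing.injective D K
    rw [map_zero]
    exact hzero
  have h2 : r ∈ p := Ideal.Quotient.eq_zero_iff_mem.mp h1
  exact Set.disjoint_left.mp hdisj h2 hr

/-- strip powers of X from a nonzero integer polynomial. -/
theorem strip_aux : ∀ (n : ℕ) (P : Polynomial ℤ), P.natDegree ≤ n → P ≠ 0 →
    ∃ (s : ℕ) (Q : Polynomial ℤ), Q.coeff 0 ≠ 0 ∧ P = X ^ s * Q := by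
  intro n
  induction n with
  | zero =>
    intro P hd h0
    obtain ⟨a, rfl⟩ := Polynomial.natDegree_eq_zero.mp (Nat.le_zero.mp hd)
    refine ⟨0, Polynomial.C a, ?_, by rw [pow_zero, one_mul]⟩
    simpa using fun ha => h0 (by rw [ha, Polynomial.C_0])
  | succ n ih =>
    intro P hd h0
    by_cases hc : P.coeff 0 = 0
    · obtain ⟨Q, hQ⟩ := Polynomial.X_dvd_iff.mpr hc
      have hQ0 : Q ≠ 0 := by rintro rfl; rw [mul_zero] at hQ; exact h0 hQ
      have hdeg : Q.natDegree ≤ n := by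
        have h1 : P.natDegree = 1 + Q.natDegree := by
          rw [hQ, Polynomial.natDegree_mul Polynomial.X_ne_zero hQ0, Polynomial.natDegree_X]
        omega
      obtain ⟨s, Q', h1, h2⟩ := ih Q hdeg hQ0
      exact ⟨s + 1, Q', h1, by rw [hQ, h2, pow_succ]; ring⟩
    · exact ⟨0, P, hc, by rw [pow_zero, one_mul]⟩

theorem strip (P : Polynomial ℤ) (h0 : P ≠ 0) :
    ∃ (s : ℕ) (Q : Polynomial ℤ), Q.coeff 0 ≠ 0 ∧ P = X ^ s * Q :=
  strip_aux P.natDegree P le_rfl h0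

theorem no_int_jac [CharZero R] (h : ¬Submaximal R) {c : ℤ}
    (hc : (c : R) ∈ (⊥ : Ideal R).jacobson) : c = 0 := by
  by_contra hc0
  have hu : IsUnit ((c : R) * ((-c : ℤ) : R) + 1) := Ideal.mem_jacobson_bot.mp hc _
  have hcast : (c : R) * ((-c : ℤ) : R) + 1 = ((1 - c ^ 2 : ℤ) : R) := by push_cast; ring
  rw [hcast] at hu
  set m : ℤ := 1 - c ^ 2 with hm
  have hm0 : m ≠ 0 := by
    intro hz
    rw [hz, Int.cast_zero, isUnit_zero_iff] at hu
    exact zero_ne_one hu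
  have hmabs : m.natAbs ≠ 1 := by
    intro h1
    rcases Int.natAbs_eq_iff.mp h1 with h2 | h2
    · have h3 : c ^ 2 = 0 := by omega
      exact hc0 (pow_eq_zero_iff (two_ne_zero) |>.mp h3)
    · have h3 : c * c = 2 := by
        have h4 : c ^ 2 = 2 := by omega
        rw [sq] at h4; exact h4
    -- c ∣ 2, so |c| ≤ 2
      have hdvd : c ∣ 2 := ⟨c, h3.symm⟩
      have habs : c.natAbs ∣ 2 := by
        have := Int.natAbs_dvd_natAbs.mpr hdvd
        simpa using this
      have hle : c.natAbs ≤ 2 := Nat.le_of_dvd (by norm_num) habs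
      have h5 : c = -2 ∨ c = -1 ∨ c = 1 ∨ c = 2 := by omega
      rcases h5 with rfl | rfl | rfl | rfl <;> norm_num at h3
  set q := m.natAbs.minFac with hq
  have hqp : q.Prime := Nat.minFac_prime hmabs
  have hqdvd : (q : ℤ) ∣ m := by
    have h1 : (q : ℤ) ∣ (m.natAbs : ℤ) := Int.natCast_dvd_natCast.mpr (Nat.minFac_dvd _)
    exact h1.trans (Int.natAbs_dvd.mpr dvd_rfl)
  have hq_unit : IsUnit ((q : ℤ) : R) := by
    apply isUnit_of_dvd_unit _ hu
    have := map_dvd (Int.castRingHom R) hqdvd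
    simpa using this
  obtain ⟨w, hw, hw'⟩ := isUnit_iff_exists.mp hq_unit
  set πR : R := ((q : ℤ) : R) with hπR
  set S1 : Submonoid R :=
    { carrier := {z | ∃ n : ℤ, n ≠ 0 ∧ z = (n : R)}
      one_mem' := ⟨1, one_ne_zero, by push_cast; ring⟩
      mul_mem' := by
        rintro a b ⟨n1, hn1, rfl⟩ ⟨n2, hn2, rfl⟩
        exact ⟨n1 * n2, mul_ne_zero hn1 hn2, by push_cast; ring⟩ } with hS1
  have h0S : (0 : R) ∉ S1 := by
    rintro ⟨n, hn, hzero⟩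
    exact hn (by exact_mod_cast hzero.symm)
  obtain ⟨K, fK, ρ, hρ⟩ := exists_quot S1 h0S
  have hInt : ∀ n : ℤ, n ≠ 0 → ((n : ℤ) : K) ≠ 0 := by
    intro n hn
    have h1 : ρ ((n : ℤ) : R) ≠ 0 := hρ _ ⟨n, hn, rfl⟩
    rwa [map_intCast] at h1
  have hInj : ∀ a b : ℤ, ((a : ℤ) : K) = ((b : ℤ) : K) → a = b := by
    intro a b hab
    by_contra hne
    apply hInt (a - b) (sub_ne_zero.mpr hne)
    push_cast
    rw [sub_eq_zero]
    exact hab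
  set πK : K := ((q : ℤ) : K) with hπK
  have hρπ : ρ πR = πK := by rw [hπR, hπK, map_intCast]
  have hπK0 : πK ≠ 0 := hInt _ (by exact_mod_cast hqp.ne_zero)
  have hqZp : Prime (q : ℤ) := Nat.prime_iff_prime_int.mp hqp
  have hqd1 : ¬ (q : ℤ) ∣ 1 := by
    intro hd
    have := Int.eq_one_of_dvd_one (by positivity) hd
    have : q = 1 := by exact_mod_cast this
    exact hqp.ne_one this
  set Vq : Subring K :=
    { carrier := {x | ∃ a b : ℤ, ¬ (q : ℤ) ∣ b ∧ x * ((b : ℤ) : K) = ((a : ℤ) : K)}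
      one_mem' := ⟨1, 1, hqd1, by rw [one_mul]⟩
      zero_mem' := ⟨0, 1, hqd1, by push_cast; ring⟩
      mul_mem' := by
        rintro x y ⟨a1, b1, hb1, he1⟩ ⟨a2, b2, hb2, he2⟩
        refine ⟨a1 * a2, b1 * b2, fun hd => ?_, ?_⟩
        · rcases hqZp.dvd_mul.mp hd with h | h
          exacts [hb1 h, hb2 h]
        · push_cast
          push_cast at he1 he2
          calc x * y * ((b1 : K) * (b2 : K)) = (x * (b1 : K)) * (y * (b2 : K)) := by ring
            _ = (a1 : K) * (a2 : K) := by rw [he1, he2]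
      add_mem' := by
        rintro x y ⟨a1, b1, hb1, he1⟩ ⟨a2, b2, hb2, he2⟩
        refine ⟨a1 * b2 + a2 * b1, b1 * b2, fun hd => ?_, ?_⟩
        · rcases hqZp.dvd_mul.mp hd with h | h
          exacts [hb1 h, hb2 h]
        · push_cast
          push_cast at he1 he2
          calc (x + y) * ((b1 : K) * (b2 : K))
              = (x * (b1 : K)) * (b2 : K) + (y * (b2 : K)) * (b1 : K) := by ring
            _ = (a1 : K) * (b2 : K) + (a2 : K) * (b1 : K) := by rw [he1, he2]
      neg_mem' := by
        rintro x ⟨a, b, hb, he⟩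
        refine ⟨-a, b, hb, ?_⟩
        push_cast
        push_cast at he
        rw [← he]; ring } with hVq
  have hbne : ∀ b : ℤ, ¬ (q : ℤ) ∣ b → ((b : ℤ) : K) ≠ 0 := by
    intro b hb
    exact hInt b (fun hz => hb (hz ▸ dvd_zero _))
  have hGood : Good πK Vq := by
    refine ⟨⟨q, 1, hqd1, by rw [hπK]; push_cast; ring⟩, ?_, ?_⟩
    · -- NF
      rintro y ⟨a, b, hb, he⟩ hy0
      have hbK : ((b : ℤ) : K) ≠ 0 := hbne b hb
      have ha0 : a ≠ 0 := by
        rintro rfl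
        rw [Int.cast_zero] at he
        exact hy0 ((mul_eq_zero.mp he).resolve_right hbK)
      have hfin : FiniteMultiplicity (q : ℤ) a := by
        rw [Int.finiteMultiplicity_iff]
        exact ⟨by simpa using hqp.ne_one, ha0⟩
      obtain ⟨d, hd, hqd⟩ := hfin.exists_eq_pow_mul_and_not_dvd
      set k := multiplicity (q : ℤ) a with hkdef
      have hdK : ((d : ℤ) : K) ≠ 0 := hbne d hqd
      have hak : ((a : ℤ) : K) = πK ^ k * ((d : ℤ) : K) := by
        rw [hd]; push_cast; rw [hπK]; push_cast; ring
      have hpkne : πK ^ k ≠ 0 := pow_ne_zero _ hπK0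
      refine ⟨k, y * (πK ^ k)⁻¹, ⟨⟨d, b, hb, ?_⟩, ((b : ℤ) : K) * (((d : ℤ) : K))⁻¹,
        ⟨b, d, hqd, by field_simp⟩, ?_⟩, ?_⟩
      · calc y * (πK ^ k)⁻¹ * ((b : ℤ) : K) = (y * ((b : ℤ) : K)) * (πK ^ k)⁻¹ := by ring
          _ = ((a : ℤ) : K) * (πK ^ k)⁻¹ := by rw [he]
          _ = ((d : ℤ) : K) := by rw [hak]; field_simp
      · calc y * (πK ^ k)⁻¹ * (((b : ℤ) : K) * (((d : ℤ) : K))⁻¹)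
            = (y * ((b : ℤ) : K)) * (πK ^ k)⁻¹ * (((d : ℤ) : K))⁻¹ := by ring
          _ = ((a : ℤ) : K) * (πK ^ k)⁻¹ * (((d : ℤ) : K))⁻¹ := by rw [he]
          _ = 1 := by rw [hak]; field_simp
      · rw [← mul_assoc, mul_comm (πK ^ k) y, mul_assoc, mul_inv_cancel₀ hpkne, mul_one]
    · -- NoInv
      rintro u ⟨a, b, hb, he⟩ hinv
      apply hb
      have h1 : ((b : ℤ) : K) = ((q * a : ℤ) : K) := by
        push_cast
        push_cast at he
        calc (b : K) = (πK * u) * (b : K) := by rw [hinv, one_mul]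
          _ = πK * (u * (b : K)) := by ring
          _ = (q : K) * (a : K) := by rw [he, hπK]; push_cast; ring
      have h2 : b = q * a := hInj _ _ h1
      exact ⟨a, h2⟩
  obtain ⟨T, hπT, hNoInv, hsat⟩ := kernel hπK0 Vq hGood
  have hπw : πR * w = 1 := hw
  refine h (submax_pull ρ πR w hπw T ?_ ?_ ?_)
  · rw [hρπ]; exact hπT
  · rw [hρπ]; exact hNoInv
  · rw [hρπ]; exact hsat

theorem part1_aux [CharZero R] (h : ¬Submaximal R) :
    ∀ x ∈ (⊥ : Ideal R).jacobson, ∀ f : Polynomial ℤ,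
      Polynomial.aeval x f = 0 → f.coeff 0 = 0 := by
  intro x hx f hf
  set c := f.coeff 0 with hcdef
  obtain ⟨g, hg⟩ : Polynomial.X ∣ (f - Polynomial.C c) :=
    Polynomial.X_dvd_iff.mpr (by simp [hcdef])
  have heval : Polynomial.aeval x (f - Polynomial.C c) = x * Polynomial.aeval x g := by
    rw [hg, map_mul, Polynomial.aeval_X]
  rw [map_sub, hf, Polynomial.aeval_C, zero_sub] at heval
  have hcJ : ((c : ℤ) : R) ∈ (⊥ : Ideal R).jacobson := by
    have h2 : ((c : ℤ) : R) = x * (-(Polynomial.aeval x g)) := by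
      have h3 : algebraMap ℤ R c = ((c : ℤ) : R) := by simp
      rw [← h3, ← neg_eq_iff_eq_neg.mpr heval.symm]
      ring
    rw [h2]
    exact Ideal.mul_mem_right _ _ hx
  exact no_int_jac h hcJ

theorem part2_aux [CharZero R] (h : ¬Submaximal R) (x : R)
    (hx : x ∈ (⊥ : Ideal R).jacobson) (hreg : ∀ y, x * y = 0 → y = 0) : False := by
  classical
  have hu : IsUnit (x * 1 + 1) := Ideal.mem_jacobson_bot.mp hx 1
  rw [mul_one] at hu
  obtain ⟨w, hw, hw'⟩ := isUnit_iff_exists.mp hu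
  set πR : R := x + 1 with hπR
  have hregpow : ∀ (s : ℕ) (z : R), x ^ s * z = 0 → z = 0 := by
    intro s
    induction s with
    | zero => intro z hz; simpa using hz
    | succ s ih =>
      intro z hz
      have h1 : x ^ s * (x * z) = 0 := by rw [← hz, pow_succ]; ring
      exact hreg z (ih _ h1)
  -- the key identity lemma
  have hrefl : ∀ F : Polynomial ℤ,
      Polynomial.aeval πR (Polynomial.reflect F.natDegree F) * w ^ F.natDegree
        = Polynomial.aeval w F := by
    intro F
    haveI : Invertible w := ⟨πR, hw, hw'⟩
    have hiv : ⅟ w = πR := invOf_eq_right_inv hw'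
    have := Polynomial.eval₂_reflect_mul_pow (algebraMap ℤ R) w F.natDegree F le_rfl
    rw [hiv] at this
    exact this
  have hrefl2 : ∀ F : Polynomial ℤ,
      Polynomial.aeval w (Polynomial.reflect F.natDegree F) * πR ^ F.natDegree
        = Polynomial.aeval πR F := by
    intro F
    haveI : Invertible πR := ⟨w, hw', hw⟩
    have hiv : ⅟ πR = w := invOf_eq_right_inv hw
    have := Polynomial.eval₂_reflect_mul_pow (algebraMap ℤ R) πR F.natDegree F le_rfl
    rw [hiv] at this
    exact this
  have hS0 : ∀ (n : ℤ) (F : Polynomial ℤ), n ≠ 0 → F ≠ 0 →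
      (n : R) * Polynomial.aeval w F ≠ 0 := by
    intro n F hn hF h0
    set H := Polynomial.reflect F.natDegree F with hH
    have hH0 : H ≠ 0 := fun hz => hF (Polynomial.reflect_eq_zero_iff.mp hz)
    have h1 : (n : R) * Polynomial.aeval πR H = 0 := by
      have h2 : (n : R) * (Polynomial.aeval πR H * w ^ F.natDegree) = 0 := by
        rw [hrefl F, h0]
      have h3 : ((n : R) * Polynomial.aeval πR H) * (w ^ F.natDegree * πR ^ F.natDegree) = 0 := by
        rw [show ((n : R) * Polynomial.aeval πR H) * (w ^ F.natDegree * πR ^ F.natDegree)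
            = ((n : R) * (Polynomial.aeval πR H * w ^ F.natDegree)) * πR ^ F.natDegree by ring,
          h2, zero_mul]
      rwa [← mul_pow, hw', one_pow, mul_one] at h3
    set G := H.comp (Polynomial.X + Polynomial.C 1) with hG
    have hGx : Polynomial.aeval x G = Polynomial.aeval πR H := by
      rw [hG, Polynomial.aeval_comp]
      congr 1
      rw [map_add, Polynomial.aeval_X, Polynomial.aeval_C]
      simp [hπR]
    have hG0 : G ≠ 0 := by
      intro hz
      apply hH0
      have h4 : (H.comp (Polynomial.X + Polynomial.C 1)).comp
          (Polynomial.X - Polynomial.C 1) = H := by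
        rw [Polynomial.comp_assoc]
        have h5 : ((Polynomial.X + Polynomial.C 1 : Polynomial ℤ)).comp
            ((Polynomial.X - Polynomial.C 1 : Polynomial ℤ))
            = (Polynomial.X : Polynomial ℤ) := by
          rw [Polynomial.add_comp, Polynomial.X_comp, Polynomial.C_comp]
          ring
        rw [h5, Polynomial.comp_X]
      rw [← h4, ← hG, hz, Polynomial.zero_comp]
    set P := Polynomial.C n * G with hP
    have hP0 : P ≠ 0 := mul_ne_zero (by simpa using hn) hG0
    obtain ⟨s, Q, hQ0, hPQ⟩ := strip P hP0
    have hQx : Polynomial.aeval x Q = 0 := by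
      apply hregpow s
      have h6 : Polynomial.aeval x P = 0 := by
        rw [hP, map_mul, Polynomial.aeval_C, hGx]
        simp only [eq_intCast]
        rw [h1]
      rw [← h6, hPQ, map_mul, map_pow, Polynomial.aeval_X]
    exact hQ0 (part1_aux h x hx Q hQx)
  set S2 : Submonoid R :=
    { carrier := {z | ∃ (n : ℤ) (F : Polynomial ℤ), n ≠ 0 ∧ F ≠ 0 ∧
        z = (n : R) * Polynomial.aeval w F}
      one_mem' := ⟨1, 1, one_ne_zero, one_ne_zero, by simp⟩
      mul_mem' := by
        rintro z1 z2 ⟨n1, F1, hn1, hF1, rfl⟩ ⟨n2, F2, hn2, hF2, rfl⟩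
        refine ⟨n1 * n2, F1 * F2, mul_ne_zero hn1 hn2, mul_ne_zero hF1 hF2, ?_⟩
        push_cast
        rw [map_mul]
        ring } with hS2
  have h0S : (0 : R) ∉ S2 := by
    rintro ⟨n, F, hn, hF, hz⟩
    exact hS0 n F hn hF hz.symm
  obtain ⟨K, fK, ρ, hρ⟩ := exists_quot S2 h0S
  set πK : K := ρ πR with hπK
  set wk : K := ρ w with hwk
  have hπwK : πK * wk = 1 := by rw [hπK, hwk, ← map_mul, hw, map_one]
  have hπK0 : πK ≠ 0 := by
    intro hz
    rw [hz, zero_mul] at hπwK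
    exact zero_ne_one hπwK
  -- transcendence of πK over ℤ
  have htr : ∀ Q : Polynomial ℤ, Q ≠ 0 → Polynomial.aeval πK Q ≠ 0 := by
    intro Q hQ h0
    have h1 : Polynomial.aeval πK Q = ρ (Polynomial.aeval πR Q) :=
      Polynomial.aeval_algHom_apply ρ.toIntAlgHom πR Q
    have h2 : ρ (Polynomial.aeval πR Q) = 0 := by rw [← h1, h0]
    have h3 : ρ (Polynomial.aeval w (Polynomial.reflect Q.natDegree Q)) * πK ^ Q.natDegree
        = 0 := by
      rw [hπK, ← map_pow, ← map_mul, hrefl2 Q, h2]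
    have h4 : ρ (Polynomial.aeval w (Polynomial.reflect Q.natDegree Q)) = 0 :=
      (mul_eq_zero.mp h3).resolve_right (pow_ne_zero _ hπK0)
    apply hρ (Polynomial.aeval w (Polynomial.reflect Q.natDegree Q))
      ⟨1, Polynomial.reflect Q.natDegree Q, one_ne_zero,
        fun hz => hQ (Polynomial.reflect_eq_zero_iff.mp hz), by push_cast; ring⟩
    exact h4
  -- the initial good subring : rational functions in πK regular at 0
  set Vt : Subring K :=
    { carrier := {y | ∃ F G : Polynomial ℤ, G.coeff 0 ≠ 0 ∧
        y * Polynomial.aeval πK G = Polynomial.aeval πK F}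
      one_mem' := ⟨1, 1, by simp, by rw [one_mul]⟩
      zero_mem' := ⟨0, 1, by simp, by simp⟩
      mul_mem' := by
        rintro y1 y2 ⟨F1, G1, hG1, he1⟩ ⟨F2, G2, hG2, he2⟩
        refine ⟨F1 * F2, G1 * G2, by rw [Polynomial.mul_coeff_zero]; exact mul_ne_zero hG1 hG2, ?_⟩
        rw [map_mul, map_mul]
        calc y1 * y2 * (Polynomial.aeval πK G1 * Polynomial.aeval πK G2)
            = (y1 * Polynomial.aeval πK G1) * (y2 * Polynomial.aeval πK G2) := by ring
          _ = _ := by rw [he1, he2]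
      add_mem' := by
        rintro y1 y2 ⟨F1, G1, hG1, he1⟩ ⟨F2, G2, hG2, he2⟩
        refine ⟨F1 * G2 + F2 * G1, G1 * G2,
          by rw [Polynomial.mul_coeff_zero]; exact mul_ne_zero hG1 hG2, ?_⟩
        rw [map_add, map_mul, map_mul, map_mul]
        calc (y1 + y2) * (Polynomial.aeval πK G1 * Polynomial.aeval πK G2)
            = (y1 * Polynomial.aeval πK G1) * Polynomial.aeval πK G2
              + (y2 * Polynomial.aeval πK G2) * Polynomial.aeval πK G1 := by ring
          _ = _ := by rw [he1, he2]
      neg_mem' := by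
        rintro y ⟨F, G, hG, he⟩
        exact ⟨-F, G, hG, by rw [map_neg, ← he]; ring⟩ } with hVt
  have hne : ∀ G : Polynomial ℤ, G.coeff 0 ≠ 0 → Polynomial.aeval πK G ≠ 0 := by
    intro G hG
    apply htr
    intro hz
    rw [hz] at hG
    simp at hG
  have hGood : Good πK Vt := by
    refine ⟨⟨Polynomial.X, 1, by simp, by simp⟩, ?_, ?_⟩
    · -- NF
      rintro y ⟨F, G, hG, he⟩ hy0
      have hGne : Polynomial.aeval πK G ≠ 0 := hne G hG
      have hF0 : F ≠ 0 := by
        rintro rfl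
        rw [map_zero] at he
        exact hy0 ((mul_eq_zero.mp he).resolve_right hGne)
      obtain ⟨s, F₀, hF₀0, hFF⟩ := strip F hF0
      have hF₀ne : Polynomial.aeval πK F₀ ≠ 0 := hne F₀ hF₀0
      have haF : Polynomial.aeval πK F = πK ^ s * Polynomial.aeval πK F₀ := by
        rw [hFF, map_mul, map_pow, Polynomial.aeval_X]
      refine ⟨s, Polynomial.aeval πK F₀ * (Polynomial.aeval πK G)⁻¹,
        ⟨⟨F₀, G, hG, by rw [mul_assoc, inv_mul_cancel₀ hGne, mul_one]⟩,
          Polynomial.aeval πK G * (Polynomial.aeval πK F₀)⁻¹,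
          ⟨G, F₀, hF₀0, by rw [mul_assoc, inv_mul_cancel₀ hF₀ne, mul_one]⟩, ?_⟩, ?_⟩
      · field_simp
        try rw [mul_comm]
        try exact div_self (mul_ne_zero hGne hF₀ne)
      · have h1 : y * Polynomial.aeval πK G = πK ^ s * Polynomial.aeval πK F₀ := by
          rw [he, haF]
        have h2 : y = πK ^ s * Polynomial.aeval πK F₀ / Polynomial.aeval πK G :=
          (eq_div_iff hGne).mpr h1
        rw [h2, div_eq_mul_inv, mul_assoc]
    · -- NoInv
      rintro u ⟨F, G, hG, he⟩ hinv
      apply hG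
      have h1 : Polynomial.aeval πK (Polynomial.X * F - G) = 0 := by
        rw [map_sub, map_mul, Polynomial.aeval_X]
        have h2 : πK * (u * Polynomial.aeval πK G) = πK * Polynomial.aeval πK F := by
          rw [he]
        rw [← mul_assoc, hinv, one_mul] at h2
        rw [← h2]; ring
      have h3 : Polynomial.X * F - G = 0 := by
        by_contra hne0
        exact htr _ hne0 h1
      have h4 : G = Polynomial.X * F := by rwa [sub_eq_zero, eq_comm] at h3
      rw [h4, Polynomial.mul_coeff_zero, Polynomial.coeff_X_zero, zero_mul]
  obtain ⟨T, hπT, hNoInv, hsat⟩ := kernel hπK0 Vt hGood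
  exact h (submax_pull ρ πR w hw T hπT hNoInv hsat)

end Reductions

end Stmt11

theorem stmt11 {R : Type*} [CommRing R] [CharZero R]
    (hJ : Ideal.jacobson (⊥ : Ideal R) ≠ ⊥) (h : ¬ Submaximal R) :
    (∀ x ∈ Ideal.jacobson (⊥ : Ideal R), ∀ f : Polynomial ℤ,
        Polynomial.aeval x f = 0 → f.coeff 0 = 0) ∧
      ∀ x ∈ Ideal.jacobson (⊥ : Ideal R), ∃ y : R, y ≠ 0 ∧ x * y = 0 := by
  constructor
  · exact Stmt11.part1_aux h
  · intro x hx
    by_contra hcon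
    push_neg at hcon
    exact Stmt11.part2_aux h x hx (fun y hy => by
      by_contra hy0
      exact hcon y hy0 hy)
end

section
/- Let R ⊆ T be a residually algebraic extension of commutative rings (for every prime ideal Q of T, T/Q is algebraic over R/(Q ∩ R)) and suppose R has finite Krull dimension n. Then T has finite Krull dimension and dim(T) ≤ dim(R). -/
open Polynomial

lemma aux19 {A : Type*} [CommRing A] [IsDomain A] (S : Subring A) (y : A) (hy : y ≠ 0)
    (H : ∀ a ∈ S, (∃ r : A, a = y * r) → a = 0) :
    ∀ p : Polynomial A, p.eval y = 0 → (∀ i, p.coeff i ∈ S) → p = 0 := by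
  suffices main : ∀ n : ℕ, ∀ p : Polynomial A, p.natDegree = n → p.eval y = 0 →
      (∀ i, p.coeff i ∈ S) → p = 0 by
    intro p hev hc; exact main p.natDegree p rfl hev hc
  intro n
  induction n using Nat.strong_induction_on with
  | _ n ih =>
    intro p hn hev hcoeff
    by_cases hp0 : p = 0
    · exact hp0
    have hdecomp : X * p.divX + C (p.coeff 0) = p := Polynomial.X_mul_divX_add p
    have heval : y * p.divX.eval y + p.coeff 0 = 0 := by
      have h1 := congrArg (Polynomial.eval y) hdecomp
      rw [hev] at h1
      simp only [Polynomial.eval_add, Polynomial.eval_mul, Polynomial.eval_X,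
        Polynomial.eval_C] at h1
      exact h1
    have hc0 : p.coeff 0 = 0 := by
      refine H _ (hcoeff 0) ⟨-(p.divX.eval y), ?_⟩
      linear_combination heval
    have hdx : p.divX.eval y = 0 := by
      rcases mul_eq_zero.mp (by linear_combination heval - hc0 : y * p.divX.eval y = 0) with h | h
      · exact absurd h hy
      · exact h
    by_cases hd : p.natDegree = 0
    · rw [Polynomial.eq_C_of_natDegree_eq_zero hd, hc0, map_zero]
    · have hdiv0 : p.divX = 0 := by
        refine ih p.divX.natDegree ?_ p.divX rfl hdx (fun i => by simpa using hcoeff (i+1))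
        rw [← hn, Polynomial.natDegree_divX_eq_natDegree_tsub_one]
        omega
      rw [← hdecomp, hdiv0, hc0]
      simp

theorem stmt19 {T : Type*} [CommRing T] (R : Subring T) (n : ℕ)
    (hdim : ringKrullDim R = n)
    (hres : ∀ Q : Ideal T, Q.IsPrime → ∀ y : T ⧸ Q,
      ∃ p : Polynomial (T ⧸ Q), p ≠ 0 ∧
        (∀ i, p.coeff i ∈ R.map (Ideal.Quotient.mk Q)) ∧ p.eval y = 0) :
    ringKrullDim T ≤ ringKrullDim R := by
  have key : StrictMono (fun P : PrimeSpectrum T =>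
      (⟨P.asIdeal.comap R.subtype, Ideal.IsPrime.comap _⟩ : PrimeSpectrum R)) := by
    intro P₁ P₂ h
    refine lt_of_le_of_ne (fun x hx => h.le hx) (fun heq => ?_)
    have hideq : P₁.asIdeal.comap R.subtype = P₂.asIdeal.comap R.subtype :=
      congrArg PrimeSpectrum.asIdeal heq
    obtain ⟨t, ht2, ht1⟩ := SetLike.exists_of_lt
      (show P₁.asIdeal < P₂.asIdeal from h)
    set Q := P₁.asIdeal with hQ
    haveI := P₁.isPrime
    set y : T ⧸ Q := Ideal.Quotient.mk Q t with hy'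
    have hy : y ≠ 0 := by
      simpa [hy', Ideal.Quotient.eq_zero_iff_mem] using ht1
    have H : ∀ a ∈ R.map (Ideal.Quotient.mk Q), (∃ r : T ⧸ Q, a = y * r) → a = 0 := by
      rintro a ⟨b, hbR, rfl⟩ ⟨r, har⟩
      obtain ⟨s, rfl⟩ := Ideal.Quotient.mk_surjective r
      have hbQ2 : b ∈ P₂.asIdeal := by
        have : b - t * s ∈ Q := by
          rw [← Ideal.Quotient.eq_zero_iff_mem]
          simp only [map_sub, map_mul]
          rw [har]
          ring
        have := h.le this
        have : b = (b - t * s) + t * s := by ring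
        rw [this]
        exact P₂.asIdeal.add_mem ‹b - t*s ∈ P₂.asIdeal› (P₂.asIdeal.mul_mem_right s ht2)
      have : (⟨b, hbR⟩ : R) ∈ P₂.asIdeal.comap R.subtype := hbQ2
      rw [← hideq] at this
      exact Ideal.Quotient.eq_zero_iff_mem.mpr this
    obtain ⟨p, hp0, hpc, hpe⟩ := hres Q P₁.isPrime y
    exact hp0 (aux19 _ y hy H p hpe hpc)
  exact Order.krullDim_le_of_strictMono _ key
end
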